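/- Let μ be a partition of k with length l, let n ≥ k + l, and let t_1, …, t_k be integers with 2 ≤ t_1 ≤ ⋯ ≤ t_k ≤ n. Then the coefficient in ℚ[S(n)] of the canonical permutation σ_μ in the product J_{t_1} J_{t_2} ⋯ J_{t_k} equals 1 if for every 1 ≤ i ≤ l the segment (t_{μ_1+⋯+μ_{i−1}+1}, …, t_{μ_1+⋯+μ_{i−1}+μ_i}) belongs to 𝔈(μ_1+⋯+μ_{i−1}+i; μ_i), and equals 0 otherwise. -/

import Mathlib

noncomputable section
open scoped Classical

abbrev GA (n : ℕ) := MonoidAlgebra ℚ (Equiv.Perm (Fin n))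

/-- The Jucys–Murphy element `J_{i+1} = (1,i+1) + ⋯ + (i,i+1)` (zero-based index `i`),
so that `JM n 0 = J_1 = 0`. -/
def JM (n : ℕ) (i : Fin n) : GA n :=
  ∑ s ∈ Finset.univ.filter (fun s => s < i), MonoidAlgebra.single (Equiv.swap s i) (1 : ℚ)

/-- Membership in `𝔈(a;r)`: a weakly increasing sequence `(i_1 ≤ ⋯ ≤ i_r)` (zero-based here)
with `i_p ≥ a + p` for `1 ≤ p ≤ r − 1` and `i_r = a + r`. -/
def Epred (a r : ℕ) (t : Fin r → ℕ) : Prop :=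
  Monotone t ∧ (∀ p : Fin r, (p : ℕ) + 1 ≤ r - 1 → a + (p : ℕ) + 1 ≤ t p) ∧
    (∀ p : Fin r, (p : ℕ) + 1 = r → t p = a + r)

/-- The cycle `(o+1, o+2, …, o+m+1)` (1-based), i.e. on zero-based points `o, …, o+m`. -/
def cycleOn (n : ℕ) (hn : 0 < n) (o m : ℕ) : Equiv.Perm (Fin n) :=
  ((List.range (m + 1)).map (fun j => (⟨(o + j) % n, Nat.mod_lt _ hn⟩ : Fin n))).formPerm

/-- Auxiliary: product of the canonical disjoint cycles on consecutive blocks. -/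
def canonicalPermAux (n : ℕ) (hn : 0 < n) : ℕ → List ℕ → Equiv.Perm (Fin n)
  | _, [] => 1
  | o, m :: rest => cycleOn n hn o m * canonicalPermAux n hn (o + m + 1) rest

/-- The canonical permutation `σ_μ` of reduced cycle type `μ`: the product of disjoint
cycles of lengths `μ_1+1, μ_2+1, …` on consecutive blocks of points. -/
def canonicalPerm (n : ℕ) (hn : 0 < n) (mu : List ℕ) : Equiv.Perm (Fin n) :=
  canonicalPermAux n hn 0 mu

/-! ### Section A : numeric evaluation -/

def evalCyc (o m x : ℕ) : ℕ :=
  if x < o then x else if x < o + m then x + 1 else if x = o + m then o else x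

def evalComp (o : ℕ) : List ℕ → ℕ → ℕ
  | [], x => x
  | m :: rest, x => evalCyc o m (evalComp (o + m + 1) rest x)

lemma evalCyc_of_lt {o m x : ℕ} (h : x < o) : evalCyc o m x = x := by
  unfold evalCyc; simp [h]

lemma evalCyc_of_gt {o m x : ℕ} (h : o + m < x) : evalCyc o m x = x := by
  unfold evalCyc; split_ifs <;> omega

lemma evalComp_of_lt {x o : ℕ} (L : List ℕ) (h : x < o) : evalComp o L x = x := by
  induction L generalizing o with
  | nil => rfl
  | cons m rest ih =>
      show evalCyc o m (evalComp (o + m + 1) rest x) = x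
      rw [ih (by omega), evalCyc_of_lt h]

lemma evalComp_ge {x o : ℕ} (L : List ℕ) (h : o ≤ x) : o ≤ evalComp o L x := by
  induction L generalizing o with
  | nil => exact h
  | cons m rest ih =>
      show o ≤ evalCyc o m (evalComp (o + m + 1) rest x)
      rcases lt_or_ge x (o + m + 1) with hx | hx
      · rw [evalComp_of_lt rest hx]
        unfold evalCyc; split_ifs <;> omega
      · have := ih (o := o + m + 1) hx
        rw [evalCyc_of_gt (by omega)]
        omega

lemma evalComp_lt_of_lt {x o : ℕ} (L : List ℕ) (h : x < o + L.sum + L.length) :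
    evalComp o L x < o + L.sum + L.length := by
  induction L generalizing o with
  | nil => simpa [evalComp] using h
  | cons m rest ih =>
      show evalCyc o m (evalComp (o + m + 1) rest x) < _
      simp only [List.sum_cons, List.length_cons] at h ⊢
      rcases lt_or_ge x (o + m + 1) with hx | hx
      · rw [evalComp_of_lt rest hx]
        unfold evalCyc; split_ifs <;> omega
      · have h1 := ih (o := o + m + 1) (by omega)
        have h2 := evalComp_ge (o := o + m + 1) rest hx
        rw [evalCyc_of_gt (by omega)]
        omega

lemma evalComp_zeros {x o : ℕ} {L : List ℕ} (hL : ∀ z ∈ L, z = 0) :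
    evalComp o L x = x := by
  induction L generalizing o with
  | nil => rfl
  | cons m rest ih =>
      have hm : m = 0 := hL m (by simp)
      show evalCyc o m (evalComp (o + m + 1) rest x) = x
      rw [ih (fun z hz => hL z (by simp [hz]))]
      subst hm
      unfold evalCyc; split_ifs <;> omega

lemma evalComp_append_low {x o : ℕ} (P Q : List ℕ) (h : x < o + P.sum + P.length) :
    evalComp o (P ++ Q) x = evalComp o P x := by
  induction P generalizing o with
  | nil => simp at h; simp [evalComp, evalComp_of_lt Q h]
  | cons m rest ih =>
      simp only [List.sum_cons, List.length_cons] at h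
      show evalCyc o m (evalComp (o + m + 1) (rest ++ Q) x)
        = evalCyc o m (evalComp (o + m + 1) rest x)
      rw [ih (by omega)]

lemma evalComp_append_high {x o : ℕ} (P Q : List ℕ) (h : o + P.sum + P.length ≤ x) :
    evalComp o (P ++ Q) x = evalComp (o + P.sum + P.length) Q x := by
  induction P generalizing o with
  | nil => simp
  | cons m rest ih =>
      simp only [List.sum_cons, List.length_cons] at h ⊢
      show evalCyc o m (evalComp (o + m + 1) (rest ++ Q) x) = _
      rw [ih (by omega)]
      have h2 : o + m + 1 + rest.sum + rest.length ≤ evalComp (o + m + 1 + rest.sum + rest.length) Q x :=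
        evalComp_ge Q (by omega)
      rw [evalCyc_of_gt (by omega)]
      congr 1
      omega

/-- Evaluation of `cycleOn`. -/
lemma cycleOn_apply (n : ℕ) (hn : 0 < n) (o m : ℕ) (hb : o + m < n) (x : Fin n) :
    ((cycleOn n hn o m x : Fin n) : ℕ) = evalCyc o m (x : ℕ) := by
  set f : ℕ → Fin n := fun j => (⟨(o + j) % n, Nat.mod_lt _ hn⟩ : Fin n) with hf
  have hfv : ∀ j, j ≤ m → ((f j : Fin n) : ℕ) = o + j := by
    intro j hj; simp only [hf]; exact Nat.mod_eq_of_lt (by omega)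
  set l : List (Fin n) := (List.range (m + 1)).map f with hl
  have hlen : l.length = m + 1 := by simp [hl]
  have hget : ∀ i (h : i < l.length), (l[i] : ℕ) = o + i := by
    intro i h
    have hh : i < m + 1 := by omega
    have : l[i] = f i := by
      simp only [hl, List.getElem_map, List.getElem_range]
    rw [this]
    exact hfv i (by omega)
  have hnodup : l.Nodup := by
    rw [List.nodup_iff_injective_getElem]
    intro i j hij
    have h2 : (l[(i:ℕ)]'i.isLt : ℕ) = (l[(j:ℕ)]'j.isLt : ℕ) := by
      simp only at hij; rw [hij]
    rw [hget _ i.isLt, hget _ j.isLt] at h2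
    exact Fin.ext (by omega)
  by_cases hmem : (x : ℕ) < o ∨ o + m < (x : ℕ)
  · have hx : x ∉ l := by
      intro hxl
      obtain ⟨i, hi, rfl⟩ := List.getElem_of_mem hxl
      have := hget i hi
      omega
    rw [show cycleOn n hn o m = l.formPerm from rfl, List.formPerm_apply_of_notMem hx]
    rcases hmem with h | h
    · rw [evalCyc_of_lt h]
    · rw [evalCyc_of_gt h]
  · push_neg at hmem
    obtain ⟨h1, h2⟩ := hmem
    set i : ℕ := (x : ℕ) - o with hi
    have hilt : i < l.length := by omega
    have hxi : x = l[i] := Fin.ext (by rw [hget i hilt]; omega)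
    rw [show cycleOn n hn o m = l.formPerm from rfl, hxi,
      List.formPerm_apply_getElem _ hnodup i hilt, hget _ (Nat.mod_lt _ (by omega))]
    rcases Nat.lt_or_ge i m with him | him
    · rw [Nat.mod_eq_of_lt (by omega)]
      unfold evalCyc
      split_ifs <;> omega
    · have : i = m := by omega
      subst this
      rw [hlen, Nat.mod_self]
      unfold evalCyc
      split_ifs <;> omega

lemma canonicalPermAux_apply (n : ℕ) (hn : 0 < n) (L : List ℕ) (o : ℕ)
    (hb : o + L.sum + L.length ≤ n) (x : Fin n) :
    ((canonicalPermAux n hn o L x : Fin n) : ℕ) = evalComp o L (x : ℕ) := by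
  induction L generalizing o with
  | nil => rfl
  | cons m rest ih =>
      simp only [List.sum_cons, List.length_cons] at hb
      show ((cycleOn n hn o m) ((canonicalPermAux n hn (o + m + 1) rest) x) : ℕ) = _
      have h1 := ih (o + m + 1) (by omega)
      show ((cycleOn n hn o m) _ : ℕ) = evalCyc o m (evalComp (o + m + 1) rest (x : ℕ))
      rw [← h1]
      exact cycleOn_apply n hn o m (by omega) _

/-! ### Section B : fixed subspace machinery -/

def fixSub (n : ℕ) (g : Equiv.Perm (Fin n)) : Submodule ℚ (Fin n → ℚ) where
  carrier := {v | ∀ x, v (g x) = v x}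
  add_mem' := by intro a b ha hb x; simp [ha x, hb x]
  zero_mem' := by intro x; simp
  smul_mem' := by intro c a ha x; simp [ha x]

lemma mem_fixSub {n : ℕ} {g : Equiv.Perm (Fin n)} {v : Fin n → ℚ} :
    v ∈ fixSub n g ↔ ∀ x, v (g x) = v x := Iff.rfl

lemma fixSub_one (n : ℕ) : fixSub n 1 = ⊤ := by
  ext v; simp [mem_fixSub]

lemma fixSub_inv (n : ℕ) (g : Equiv.Perm (Fin n)) : fixSub n g⁻¹ = fixSub n g := by
  ext v
  simp only [mem_fixSub]
  constructor
  · intro h x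
    have := h (g x)
    simpa using this.symm
  · intro h x
    have := h (g⁻¹ x)
    simpa using this.symm

lemma finrank_fixSub_one (n : ℕ) :
    Module.finrank ℚ (fixSub n 1) = n := by
  rw [fixSub_one, finrank_top]
  simp [Module.finrank_pi]

/-- dropping one linear condition costs at most one dimension -/
lemma finrank_le_inf_ker_add_one {n : ℕ} (W : Submodule ℚ (Fin n → ℚ))
    (f : (Fin n → ℚ) →ₗ[ℚ] ℚ) :
    Module.finrank ℚ W ≤ Module.finrank ℚ ↥(W ⊓ LinearMap.ker f) + 1 := by
  classical
  set f' : W →ₗ[ℚ] ℚ := f.domRestrict W with hf'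
  have h1 : Module.finrank ℚ ↥(LinearMap.range f') + Module.finrank ℚ ↥(LinearMap.ker f')
      = Module.finrank ℚ W := LinearMap.finrank_range_add_finrank_ker f'
  have h2 : Module.finrank ℚ ↥(LinearMap.range f') ≤ 1 := by
    have := Submodule.finrank_le (LinearMap.range f')
    simpa using this
  have h3 : LinearMap.ker f' = Submodule.comap W.subtype (W ⊓ LinearMap.ker f) := by
    ext w
    simp [hf', LinearMap.mem_ker, Submodule.mem_comap, LinearMap.domRestrict_apply, w.2]
  have h4 : Module.finrank ℚ ↥(LinearMap.ker f') = Module.finrank ℚ ↥(W ⊓ LinearMap.ker f) := by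
    rw [h3]
    exact LinearEquiv.finrank_eq (Submodule.comapSubtypeEquivOfLe inf_le_left)
  omega

def evalDiff (n : ℕ) (a b : Fin n) : (Fin n → ℚ) →ₗ[ℚ] ℚ :=
  (LinearMap.proj a : (Fin n → ℚ) →ₗ[ℚ] ℚ) - (LinearMap.proj b : (Fin n → ℚ) →ₗ[ℚ] ℚ)

/-- multiplying by a swap on the right costs at most one fixed dimension -/
lemma finrank_fixSub_le_swap {n : ℕ} (g : Equiv.Perm (Fin n)) (a b : Fin n) :
    Module.finrank ℚ (fixSub n g) ≤
      Module.finrank ℚ (fixSub n (g * Equiv.swap a b)) + 1 := by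
  have hle : fixSub n g ⊓ LinearMap.ker (evalDiff n a b) ≤ fixSub n (g * Equiv.swap a b) := by
    intro v hv
    obtain ⟨hv1, hv2⟩ := hv
    have hab : v a = v b := by
      have h := LinearMap.mem_ker.mp hv2
      simp only [evalDiff, LinearMap.sub_apply, LinearMap.proj_apply] at h
      linarith
    intro x
    simp only [Equiv.Perm.coe_mul, Function.comp_apply]
    rcases eq_or_ne x a with rfl | hxa
    · rw [Equiv.swap_apply_left, hv1 b, hab]
    rcases eq_or_ne x b with rfl | hxb
    · rw [Equiv.swap_apply_right, hv1 a, hab]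
    · rw [Equiv.swap_apply_of_ne_of_ne hxa hxb, hv1 x]
  calc Module.finrank ℚ (fixSub n g)
      ≤ Module.finrank ℚ ↥(fixSub n g ⊓ LinearMap.ker (evalDiff n a b)) + 1 :=
        finrank_le_inf_ker_add_one _ _
    _ ≤ Module.finrank ℚ (fixSub n (g * Equiv.swap a b)) + 1 := by
        exact Nat.add_le_add_right (Submodule.finrank_mono hle) 1

/-- merging two distinct cycles strictly decreases the fixed dimension -/
lemma finrank_fixSub_merge {n : ℕ} (σ : Equiv.Perm (Fin n)) (s b : Fin n)
    (hne : s ≠ b) (hnc : ¬ σ.SameCycle s b) :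
    Module.finrank ℚ (fixSub n (σ * Equiv.swap s b)) <
      Module.finrank ℚ (fixSub n σ) := by
  have hincl : fixSub n (σ * Equiv.swap s b) ≤ fixSub n σ := by
    intro v hv
    have hvs : v (σ s) = v b := by
      have := hv b
      simpa [Equiv.swap_apply_right] using this
    have hvb : v (σ b) = v s := by
      have := hv s
      simpa [Equiv.swap_apply_left] using this
    have hvo : ∀ x, x ≠ s → x ≠ b → v (σ x) = v x := by
      intro x hxs hxb
      have := hv x
      simpa [Equiv.swap_apply_of_ne_of_ne hxs hxb] using this
    set δ : ℚ := v b - v s with hδ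
    have hw : ∀ x, v (σ x) - v x = (if x = s then δ else if x = b then -δ else 0) := by
      intro x
      rcases eq_or_ne x s with rfl | hxs
      · simp [hvs, hδ]
      rcases eq_or_ne x b with rfl | hxb
      · rw [if_neg hxs, if_pos rfl, hvb, hδ]; ring
      · simp [hxs, hxb, hvo x hxs hxb]
    have hpow : ∀ i : ℕ, (σ ^ i) s ≠ b := by
      intro i hi
      exact hnc ⟨(i : ℤ), by rw [zpow_natCast]; exact hi⟩
    set j := orderOf σ with hj
    have hj0 : 0 < j := orderOf_pos σ
    have htel : ∑ i ∈ Finset.range j, (v ((σ ^ (i+1)) s) - v ((σ ^ i) s)) = 0 := by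
      rw [Finset.sum_range_sub (f := fun i => v ((σ ^ i) s))]
      rw [hj, pow_orderOf_eq_one]
      simp
    have hterm : ∀ i ∈ Finset.range j,
        (v ((σ ^ (i+1)) s) - v ((σ ^ i) s)) = (if (σ ^ i) s = s then δ else 0) := by
      intro i _
      have h1 : (σ ^ (i+1)) s = σ ((σ ^ i) s) := by
        rw [pow_succ']; rfl
      rw [h1, hw ((σ ^ i) s)]
      simp [hpow i]
    rw [Finset.sum_congr rfl hterm, ← Finset.sum_filter, Finset.sum_const, nsmul_eq_mul] at htel
    have hcmem : (0:ℕ) ∈ (Finset.range j).filter (fun i => (σ ^ i) s = s) := by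
      simp [hj0]
    have hcard : 0 < ((Finset.range j).filter (fun i => (σ ^ i) s = s)).card :=
      Finset.card_pos.mpr ⟨0, hcmem⟩
    have hδ0 : δ = 0 := by
      rcases mul_eq_zero.mp htel with h | h
      · exact absurd (Nat.cast_eq_zero.mp h) (by omega)
      · exact h
    intro x
    have h := hw x
    rw [hδ0] at h
    simp only [neg_zero, ite_self] at h
    linarith
  set v0 : Fin n → ℚ := fun x => if σ.SameCycle x s then (1:ℚ) else 0 with hv0
  have hv0mem : v0 ∈ fixSub n σ := by
    intro x
    simp only [hv0]
    by_cases h : σ.SameCycle x s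
    · rw [if_pos h, if_pos ((Equiv.Perm.sameCycle_apply_left).mpr h)]
    · rw [if_neg h, if_neg (fun hh => h ((Equiv.Perm.sameCycle_apply_left).mp hh))]
  have hv0not : v0 ∉ fixSub n (σ * Equiv.swap s b) := by
    intro hmem
    have h := hmem b
    simp only [Equiv.Perm.coe_mul, Function.comp_apply, Equiv.swap_apply_right, hv0] at h
    rw [if_pos ((Equiv.Perm.sameCycle_apply_left).mpr (Equiv.Perm.SameCycle.refl σ s)),
      if_neg (fun hh => hnc hh.symm)] at h
    exact one_ne_zero h
  exact Submodule.finrank_lt_finrank_of_lt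
    (lt_of_le_of_ne hincl (fun h => hv0not (h ▸ hv0mem)))

/-! ### Section C : lower bound on reduced length of canonical permutations -/

lemma cycleOn_zero (n : ℕ) (hn : 0 < n) (o : ℕ) : cycleOn n hn o 0 = 1 := by
  unfold cycleOn
  rw [show List.range (0+1) = [0] from rfl, List.map_cons, List.map_nil, List.formPerm_singleton]

lemma cycleOn_succ (n : ℕ) (hn : 0 < n) (o m : ℕ) (h : o + m + 1 < n) :
    cycleOn n hn o (m + 1) =
      Equiv.swap (⟨o, by omega⟩ : Fin n) (⟨o + 1, by omega⟩ : Fin n) * cycleOn n hn (o + 1) m := by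
  unfold cycleOn
  have key : ∀ (o' m' : ℕ) (h' : o' + m' < n),
      (List.range (m' + 1)).map (fun j => (⟨(o' + j) % n, Nat.mod_lt _ hn⟩ : Fin n)) =
      (⟨o', by omega⟩ : Fin n) ::
        (List.range m').map (fun j => (⟨(o' + 1 + j) % n, Nat.mod_lt _ hn⟩ : Fin n)) := by
    intro o' m' h'
    rw [List.range_succ_eq_map, List.map_cons, List.map_map]
    congr 1
    · exact Fin.ext (by simp [Nat.mod_eq_of_lt (by omega : o' < n)])
    · apply List.map_congr_left
      intro j hj
      have hj' : j < m' := List.mem_range.mp hj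
      exact Fin.ext (by simp [Function.comp, Nat.succ_eq_add_one]; congr 1; omega)
  rw [key o (m + 1) (by omega), key (o + 1) m (by omega)]
  rw [List.formPerm_cons_cons]

lemma canonicalPermAux_fix_lt (n : ℕ) (hn : 0 < n) (L : List ℕ) (o : ℕ)
    (hb : o + L.sum + L.length ≤ n) (x : Fin n) (hx : (x : ℕ) < o) :
    canonicalPermAux n hn o L x = x := by
  apply Fin.ext
  rw [canonicalPermAux_apply n hn L o hb x, evalComp_of_lt L hx]

lemma phi_canonicalPermAux (n : ℕ) (hn : 0 < n) (L : List ℕ) :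
    ∀ o : ℕ, o + L.sum + L.length ≤ n →
      Module.finrank ℚ (fixSub n (canonicalPermAux n hn o L)) + L.sum ≤ n := by
  induction L with
  | nil =>
      intro o h
      rw [show canonicalPermAux n hn o [] = 1 from rfl, finrank_fixSub_one]
      simp
  | cons m rest ih =>
      induction m with
      | zero =>
          intro o h
          simp only [List.sum_cons, List.length_cons] at h ⊢
          rw [show canonicalPermAux n hn o (0 :: rest)
              = cycleOn n hn o 0 * canonicalPermAux n hn (o + 0 + 1) rest from rfl,
            cycleOn_zero, one_mul]
          have := ih (o + 0 + 1) (by omega)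
          omega
      | succ m ihm =>
          intro o h
          simp only [List.sum_cons, List.length_cons] at h ⊢
          have hon : o + 1 < n := by omega
          have hdec : canonicalPermAux n hn o ((m + 1) :: rest)
              = Equiv.swap (⟨o, by omega⟩ : Fin n) (⟨o + 1, by omega⟩ : Fin n) *
                canonicalPermAux n hn (o + 1) (m :: rest) := by
            have harith : o + (m + 1) + 1 = o + 1 + m + 1 := by omega
            rw [show canonicalPermAux n hn o ((m + 1) :: rest)
                = cycleOn n hn o (m + 1) * canonicalPermAux n hn (o + (m + 1) + 1) rest from rfl,
              harith, cycleOn_succ n hn o m (by omega),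
              show canonicalPermAux n hn (o + 1) (m :: rest)
                = cycleOn n hn (o + 1) m * canonicalPermAux n hn (o + 1 + m + 1) rest from rfl,
              mul_assoc]
          set ρ := canonicalPermAux n hn (o + 1) (m :: rest) with hρ
          set a : Fin n := ⟨o, by omega⟩ with ha
          set a' : Fin n := ⟨o + 1, by omega⟩ with ha'
          have hane : a ≠ a' := by
            intro hh
            have h0 := congrArg Fin.val hh
            simp only [ha, ha'] at h0
            omega
          have hb2 : (o + 1) + (m :: rest).sum + (m :: rest).length ≤ n := by
            simp only [List.sum_cons, List.length_cons]; omega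
          have hxa : (a : ℕ) < o + 1 := by simp [ha]
          have hfix : ρ a = a :=
            canonicalPermAux_fix_lt n hn (m :: rest) (o + 1) hb2 a hxa
          have hinvfix : ρ⁻¹ a = a := by
            conv_lhs => rw [← hfix]
            exact ρ.symm_apply_apply a
          have hnc : ¬ (ρ⁻¹).SameCycle a a' := by
            rintro ⟨i, hi⟩
            rw [Equiv.Perm.zpow_apply_eq_self_of_apply_eq_self hinvfix i] at hi
            exact hane hi
          have hinv : (canonicalPermAux n hn o ((m + 1) :: rest))⁻¹
              = ρ⁻¹ * Equiv.swap a a' := by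
            rw [hdec, mul_inv_rev, Equiv.swap_inv]
          have hmerge := finrank_fixSub_merge ρ⁻¹ a a' hane hnc
          rw [← hinv] at hmerge
          rw [fixSub_inv, fixSub_inv] at hmerge
          have h2 := ihm (o + 1) (by simp only [List.sum_cons, List.length_cons]; omega)
          simp only [List.sum_cons] at h2
          rw [← hρ] at h2
          omega

/-! ### Section D : coefficients of products of JM elements -/

def JMl (n : ℕ) (hn : 0 < n) (t : ℕ → ℕ) (k : ℕ) : GA n :=
  ((List.range k).map
    (fun p => JM n (⟨(t p - 1) % n, Nat.mod_lt _ hn⟩ : Fin n))).prod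

lemma JMl_zero (n : ℕ) (hn : 0 < n) (t : ℕ → ℕ) : JMl n hn t 0 = 1 := rfl

lemma JMl_succ (n : ℕ) (hn : 0 < n) (t : ℕ → ℕ) (k : ℕ) :
    JMl n hn t (k + 1) = JMl n hn t k * JM n (⟨(t k - 1) % n, Nat.mod_lt _ hn⟩ : Fin n) := by
  unfold JMl
  rw [List.range_succ, List.map_append, List.prod_append, List.map_singleton,
    List.prod_singleton]

lemma coeff_mul_JM {n : ℕ} (Q : GA n) (i : Fin n) (σ : Equiv.Perm (Fin n)) :
    (Q * JM n i).coeff σ = ∑ s ∈ Finset.univ.filter (fun s => s < i), Q.coeff (σ * Equiv.swap s i) := by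
  unfold JM
  rw [Finset.mul_sum, MonoidAlgebra.coeff_sum, Finsupp.finset_sum_apply]
  apply Finset.sum_congr rfl
  intro s _
  rw [MonoidAlgebra.mul_single_apply, mul_one, Equiv.swap_inv]

lemma one_apply_ne_zero {n : ℕ} {g : Equiv.Perm (Fin n)} (h : (1 : GA n).coeff g ≠ 0) : g = 1 := by
  by_contra hg
  apply h
  rw [MonoidAlgebra.one_def, MonoidAlgebra.single_apply, if_neg (fun hh => hg hh.symm)]

lemma JMl_fix {n : ℕ} {hn : 0 < n} (t : ℕ → ℕ) (k : ℕ) :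
    ∀ g : Equiv.Perm (Fin n), (JMl n hn t k).coeff g ≠ 0 →
      ∀ x : Fin n, (∀ p, p < k → t p - 1 < (x : ℕ)) → g x = x := by
  induction k with
  | zero =>
      intro g hne x _
      rw [one_apply_ne_zero hne]
      rfl
  | succ k ih =>
      intro g hne x hx
      rw [JMl_succ, coeff_mul_JM] at hne
      obtain ⟨s, hs, hterm⟩ := Finset.exists_ne_zero_of_sum_ne_zero hne
      rw [Finset.mem_filter] at hs
      set idx : Fin n := ⟨(t k - 1) % n, Nat.mod_lt _ hn⟩ with hidx
      have hxk : t k - 1 < (x : ℕ) := hx k (by omega)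
      have hidxv : (idx : ℕ) = t k - 1 := Nat.mod_eq_of_lt (by omega)
      have hxi : x ≠ idx := fun hh => by rw [hh, hidxv] at hxk; omega
      have hxs : x ≠ s := by
        intro hh
        have : (s : ℕ) < (idx : ℕ) := hs.2
        rw [← hh, hidxv] at this
        omega
      have h2 := ih (g * Equiv.swap s idx) hterm x (fun p hp => hx p (by omega))
      have h3 : (g * Equiv.swap s idx) x = g x := by
        simp only [Equiv.Perm.coe_mul, Function.comp_apply,
          Equiv.swap_apply_of_ne_of_ne hxs hxi]
      rw [← h3, h2]

lemma JMl_finrank {n : ℕ} {hn : 0 < n} (t : ℕ → ℕ) (k : ℕ) :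
    ∀ g : Equiv.Perm (Fin n), (JMl n hn t k).coeff g ≠ 0 →
      n ≤ Module.finrank ℚ (fixSub n g) + k := by
  induction k with
  | zero =>
      intro g hne
      rw [one_apply_ne_zero hne, finrank_fixSub_one]
      omega
  | succ k ih =>
      intro g hne
      rw [JMl_succ, coeff_mul_JM] at hne
      obtain ⟨s, _, hterm⟩ := Finset.exists_ne_zero_of_sum_ne_zero hne
      set idx : Fin n := ⟨(t k - 1) % n, Nat.mod_lt _ hn⟩ with hidx
      have h1 := ih (g * Equiv.swap s idx) hterm
      have h2 := finrank_fixSub_le_swap (g * Equiv.swap s idx) s idx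
      rw [mul_assoc, Equiv.swap_mul_self, mul_one] at h2
      omega

/-! ### Section E : structure of canonical permutations -/

lemma exists_last_nonzero {mu : List ℕ} (h : mu.sum ≠ 0) :
    ∃ P m Z, mu = P ++ (m + 1) :: Z ∧ ∀ z ∈ Z, z = 0 := by
  induction mu using List.reverseRecOn with
  | nil => simp at h
  | append_singleton ys y ih =>
      cases y with
      | zero =>
          have hys : ys.sum ≠ 0 := by
            intro h0
            apply h
            simp [h0]
          obtain ⟨P, m, Z, h1, h2⟩ := ih hys
          refine ⟨P, m, Z ++ [0], by rw [h1]; simp, ?_⟩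
          intro z hz
          rcases List.mem_append.mp hz with h' | h'
          · exact h2 z h'
          · simpa using h'
      | succ m => exact ⟨ys, m, [], by simp, by simp⟩

section EvalFacts

variable {P Z : List ℕ}

/-- evaluation of the full composition `P ++ μ :: Z` -/
lemma evalComp_decomp (hZ : ∀ z ∈ Z, z = 0) (μ : ℕ) (x : ℕ) :
    evalComp 0 (P ++ μ :: Z) x =
      if x < P.sum + P.length then evalComp 0 P x
      else evalCyc (P.sum + P.length) μ x := by
  have e0 : 0 + P.sum + P.length = P.sum + P.length := by omega
  rcases lt_or_ge x (P.sum + P.length) with hx | hx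
  · rw [evalComp_append_low P _ (by omega), if_pos hx]
  · rw [evalComp_append_high P _ (by omega), if_neg (by omega), e0]
    show evalCyc (P.sum + P.length) μ (evalComp (P.sum + P.length + μ + 1) Z x) = _
    rw [evalComp_zeros hZ]

/-- evaluation of the split composition `P ++ u :: v :: Z` -/
lemma evalComp_decomp₂ (hZ : ∀ z ∈ Z, z = 0) (u v : ℕ) (x : ℕ) :
    evalComp 0 (P ++ u :: v :: Z) x =
      if x < P.sum + P.length then evalComp 0 P x
      else evalCyc (P.sum + P.length) u (evalCyc (P.sum + P.length + u + 1) v x) := by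
  have e0 : 0 + P.sum + P.length = P.sum + P.length := by omega
  rcases lt_or_ge x (P.sum + P.length) with hx | hx
  · rw [evalComp_append_low P _ (by omega), if_pos hx]
  · rw [evalComp_append_high P _ (by omega), if_neg (by omega), e0]
    show evalCyc (P.sum + P.length) u
        (evalCyc (P.sum + P.length + u + 1) v
          (evalComp (P.sum + P.length + u + 1 + v + 1) Z x)) = _
    rw [evalComp_zeros hZ]

lemma evalComp_low_lt {x : ℕ} (hx : x < P.sum + P.length) :
    evalComp 0 P x < P.sum + P.length := by
  have := evalComp_lt_of_lt (x := x) (o := 0) P (by omega)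
  omega

end EvalFacts

section Split

set_option maxHeartbeats 2000000 in
/-- pure arithmetic form of the split identity on one block -/
lemma split_arith (A m s x : ℕ) (hs1 : A ≤ s) (hs2 : s < A + (m + 1)) (hx : A ≤ x) :
    evalCyc A (m + 1) (if x = s then A + (m + 1) else if x = A + (m + 1) then s else x)
      = evalCyc A (s - A) (evalCyc (A + (s - A) + 1) (A + m - s) x) := by
  rcases eq_or_ne x s with hxs | hxs
  · rw [if_pos hxs]
    unfold evalCyc
    split_ifs <;> omega
  rcases eq_or_ne x (A + (m + 1)) with hxM | hxM
  · rw [if_neg hxs, if_pos hxM]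
    unfold evalCyc
    split_ifs <;> omega
  · rw [if_neg hxs, if_neg hxM]
    unfold evalCyc
    split_ifs <;> omega

variable (n : ℕ) (hn : 0 < n) (P Z : List ℕ) (m : ℕ)

/-- the split identity: multiplying the canonical permutation by `swap s M`
splits the last nontrivial cycle into two canonical cycles. -/
lemma split_identity (hZ : ∀ z ∈ Z, z = 0)
    (hbound : (P.sum + (m + 1) + 0) + (P.length + 1 + Z.length) ≤ n)
    (s : ℕ) (hs1 : P.sum + P.length ≤ s) (hs2 : s < P.sum + P.length + (m + 1))
    (sF MF : Fin n) (hsF : (sF : ℕ) = s) (hMF : (MF : ℕ) = P.sum + P.length + (m + 1)) :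
    canonicalPerm n hn (P ++ (m + 1) :: Z) * Equiv.swap sF MF
      = canonicalPerm n hn
          (P ++ (s - (P.sum + P.length)) :: (P.sum + P.length + m - s) :: Z) := by
  have hZsum : Z.sum = 0 := List.sum_eq_zero hZ
  have hMn : P.sum + P.length + (m + 1) < n := by simp at hbound; omega
  have hb1 : 0 + (P ++ (m + 1) :: Z).sum + (P ++ (m + 1) :: Z).length ≤ n := by
    simp [hZsum]; omega
  have hb2 : 0 + (P ++ (s - (P.sum + P.length)) :: (P.sum + P.length + m - s) :: Z).sum
      + (P ++ (s - (P.sum + P.length)) :: (P.sum + P.length + m - s) :: Z).length ≤ n := by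
    simp [hZsum]; omega
  apply Equiv.ext
  intro x
  apply Fin.ext
  unfold canonicalPerm
  rw [Equiv.Perm.mul_apply]
  rw [canonicalPermAux_apply n hn _ 0 hb1 _, canonicalPermAux_apply n hn _ 0 hb2 x]
  have hswap : ((Equiv.swap sF MF x : Fin n) : ℕ)
      = if (x : ℕ) = s then P.sum + P.length + (m + 1)
        else if (x : ℕ) = P.sum + P.length + (m + 1) then s else (x : ℕ) := by
    rcases eq_or_ne (x : ℕ) s with hxs | hxs
    · rw [if_pos hxs, show x = sF from Fin.ext (by omega), Equiv.swap_apply_left, hMF]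
    rcases eq_or_ne (x : ℕ) (P.sum + P.length + (m + 1)) with hxM | hxM
    · rw [if_neg hxs, if_pos hxM, show x = MF from Fin.ext (by omega),
        Equiv.swap_apply_right, hsF]
    · rw [if_neg hxs, if_neg hxM,
        Equiv.swap_apply_of_ne_of_ne (fun hh => hxs (by rw [← hsF]; exact congrArg Fin.val hh))
          (fun hh => hxM (by rw [← hMF]; exact congrArg Fin.val hh))]
  rw [hswap]
  rw [evalComp_decomp hZ (m + 1),
    evalComp_decomp₂ hZ (s - (P.sum + P.length)) (P.sum + P.length + m - s) x]
  rcases lt_or_ge (x : ℕ) (P.sum + P.length) with hxA | hxA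
  · have hyx : (if (x : ℕ) = s then P.sum + P.length + (m + 1)
        else if (x : ℕ) = P.sum + P.length + (m + 1) then s else (x : ℕ)) = (x : ℕ) := by
      split_ifs <;> omega
    rw [hyx, if_pos hxA, if_pos hxA]
  · have hyA : ¬ ((if (x : ℕ) = s then P.sum + P.length + (m + 1)
        else if (x : ℕ) = P.sum + P.length + (m + 1) then s else (x : ℕ)) < P.sum + P.length) := by
      split_ifs <;> omega
    rw [if_neg hyA, if_neg (show ¬ ((x:ℕ) < P.sum + P.length) by omega)]
    exact split_arith (P.sum + P.length) m s (x : ℕ) hs1 (by omega) hxA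

end Split

/-! ### Section F : translating the Epred conditions -/

def Cond (mu : List ℕ) (t : ℕ → ℕ) : Prop :=
  ∀ i : Fin mu.length, Epred ((mu.take i).sum + i + 1) (mu.get i)
    (fun q : Fin (mu.get i) => t ((mu.take i).sum + q))

def CondO (Q : List ℕ) (S L : ℕ) (t : ℕ → ℕ) : Prop :=
  ∀ (j : ℕ) (hj : j < Q.length),
    Epred (S + (Q.take j).sum + (L + j) + 1) (Q.get ⟨j, hj⟩)
      (fun q : Fin (Q.get ⟨j, hj⟩) => t (S + (Q.take j).sum + q))

lemma Epred_congr {t : ℕ → ℕ} {a a' c c' r : ℕ}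
    (h : Epred a r (fun q : Fin r => t (c + q))) (ha : a = a') (hc : c = c') :
    Epred a' r (fun q : Fin r => t (c' + q)) := by
  subst ha; subst hc; exact h

lemma cond_iff_condO (mu : List ℕ) (t : ℕ → ℕ) : Cond mu t ↔ CondO mu 0 0 t := by
  constructor
  · intro h j hj
    have h0 := h ⟨j, hj⟩
    exact Epred_congr h0 (by simp only [Fin.val_mk]; omega) (by simp only [Fin.val_mk]; omega)
  · intro h i
    have h0 := h (i : ℕ) i.isLt
    have he : (⟨(i : ℕ), i.isLt⟩ : Fin mu.length) = i := rfl
    rw [he] at h0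
    exact Epred_congr h0 (by omega) (by omega)

lemma condO_cons {μ : ℕ} {Q : List ℕ} {S L : ℕ} {t : ℕ → ℕ} :
    CondO (μ :: Q) S L t ↔
      (Epred (S + L + 1) μ (fun q : Fin μ => t (S + q)) ∧ CondO Q (S + μ) (L + 1) t) := by
  have hts : ∀ j : ℕ, (((μ :: Q).take (j + 1)).sum) = μ + (Q.take j).sum := by
    intro j; rw [List.take_succ_cons, List.sum_cons]
  constructor
  · intro h
    refine ⟨?_, ?_⟩
    · have h0 := h 0 (by simp)
      exact Epred_congr h0 (by simp) (by simp)
    · intro j hj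
      have hj' : j + 1 < (μ :: Q).length := by simp; omega
      have h1 := h (j + 1) hj'
      have hget : (μ :: Q).get ⟨j + 1, hj'⟩ = Q.get ⟨j, hj⟩ := rfl
      rw [hget] at h1
      exact Epred_congr h1 (by rw [hts]; omega) (by rw [hts]; omega)
  · rintro ⟨h1, h2⟩ j hj
    cases j with
    | zero => exact Epred_congr h1 (by simp) (by simp)
    | succ j =>
        have hjlt : j < Q.length := by simp at hj; omega
        have h3 := h2 j hjlt
        have hget : (μ :: Q).get ⟨j + 1, hj⟩ = Q.get ⟨j, hjlt⟩ := rfl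
        rw [hget]
        exact Epred_congr h3 (by rw [hts]; omega) (by rw [hts]; omega)

lemma condO_append {Q1 Q2 : List ℕ} {t : ℕ → ℕ} :
    ∀ S L : ℕ, CondO (Q1 ++ Q2) S L t ↔
      (CondO Q1 S L t ∧ CondO Q2 (S + Q1.sum) (L + Q1.length) t) := by
  induction Q1 with
  | nil =>
      intro S L
      constructor
      · intro h
        refine ⟨fun j hj => absurd hj (by simp), fun j hj => ?_⟩
        have h0 := h j (by simpa using hj)
        have hget : ([] ++ Q2).get ⟨j, by simpa using hj⟩ = Q2.get ⟨j, hj⟩ := rfl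
        rw [hget] at h0
        exact Epred_congr h0 (by simp) (by simp)
      · rintro ⟨_, h⟩ j hj
        have h0 := h j (by simpa using hj)
        have hget : ([] ++ Q2).get ⟨j, hj⟩ = Q2.get ⟨j, by simpa using hj⟩ := rfl
        rw [hget]
        exact Epred_congr h0 (by simp) (by simp)
  | cons μ Q1' ih =>
      intro S L
      rw [show (μ :: Q1') ++ Q2 = μ :: (Q1' ++ Q2) from rfl]
      rw [condO_cons, ih, condO_cons, and_assoc]
      constructor
      · rintro ⟨h1, h2, h3⟩
        refine ⟨h1, h2, fun j hj => ?_⟩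
        exact Epred_congr (h3 j hj) (by simp [List.sum_cons]; omega) (by simp [List.sum_cons]; omega)
      · rintro ⟨h1, h2, h3⟩
        refine ⟨h1, h2, fun j hj => ?_⟩
        exact Epred_congr (h3 j hj) (by simp [List.sum_cons]; omega) (by simp [List.sum_cons]; omega)

lemma condO_zeros {Z : List ℕ} (hZ : ∀ z ∈ Z, z = 0) (S L : ℕ) (t : ℕ → ℕ) :
    CondO Z S L t := by
  intro j hj
  have hz : Z.get ⟨j, hj⟩ = 0 := hZ _ (List.get_mem Z _)
  refine ⟨?_, ?_, ?_⟩
  · intro a b _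
    exact absurd a.isLt (by omega)
  · intro p
    exact absurd p.isLt (by omega)
  · intro p
    exact absurd p.isLt (by omega)

/-- translation of `Epred` on a segment into plain arithmetic -/
lemma Epred_iff {t : ℕ → ℕ} {k : ℕ} (htm : ∀ p q : ℕ, p ≤ q → q < k → t p ≤ t q)
    (a r base : ℕ) (hbr : base + r ≤ k) :
    Epred a r (fun q : Fin r => t (base + q)) ↔
      ((∀ p, p + 2 ≤ r → a + p + 1 ≤ t (base + p)) ∧ (1 ≤ r → t (base + (r - 1)) = a + r)) := by
  constructor
  · rintro ⟨_, h1, h2⟩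
    constructor
    · intro p hp
      have := h1 ⟨p, by omega⟩ (by simp only [Fin.val_mk]; omega)
      simpa using this
    · intro hr
      have := h2 ⟨r - 1, by omega⟩ (by simp only [Fin.val_mk]; omega)
      simpa using this
  · rintro ⟨h1, h2⟩
    refine ⟨?_, ?_, ?_⟩
    · intro q q' hq
      have hq' : (q : ℕ) ≤ (q' : ℕ) := hq
      exact htm (base + q) (base + q') (by omega) (by have := q'.isLt; omega)
    · intro p hp
      exact h1 (p : ℕ) (by have := p.isLt; omega)
    · intro p hp
      have hpv : (p : ℕ) = r - 1 := by omega
      have h3 := h2 (by omega)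
      show t (base + (p : ℕ)) = a + r
      rw [show base + (p : ℕ) = base + (r - 1) by omega]
      exact h3

/-! ### Section G : existence and uniqueness of the splitting position -/

section SplitArith

variable (t : ℕ → ℕ) (K0 A m : ℕ)

def FullC : Prop := ∀ p, p + 2 ≤ m + 1 → A + 1 + p + 1 ≤ t (K0 + p)

def SplitC (u : ℕ) : Prop :=
  (∀ p, p + 2 ≤ u → A + 1 + p + 1 ≤ t (K0 + p)) ∧
  (1 ≤ u → t (K0 + (u - 1)) = A + 1 + u) ∧
  (∀ p, p + 2 ≤ m - u → A + u + 2 + p + 1 ≤ t (K0 + u + p)) ∧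
  (1 ≤ m - u → t (K0 + u + (m - u - 1)) = A + u + 2 + (m - u))

lemma splitC_unique {u1 u2 : ℕ} (h12 : u1 < u2) (h2m : u2 ≤ m)
    (hs1 : SplitC t K0 A m u1) (hs2 : SplitC t K0 A m u2) : False := by
  obtain ⟨_, hb2, _, _⟩ := hs2
  obtain ⟨_, _, hc1, hd1⟩ := hs1
  have hval : t (K0 + (u2 - 1)) = A + 1 + u2 := hb2 (by omega)
  rcases le_or_gt (u2 - 1 - u1 + 2) (m - u1) with hcase | hcase
  · have := hc1 (u2 - 1 - u1) hcase
    rw [show K0 + u1 + (u2 - 1 - u1) = K0 + (u2 - 1) by omega] at this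
    omega
  · have hv1 : 1 ≤ m - u1 := by omega
    have := hd1 hv1
    rw [show K0 + u1 + (m - u1 - 1) = K0 + (u2 - 1) by omega] at this
    omega

lemma splitC_of_fullC (hlast : t (K0 + m) = A + m + 2)
    (htm : ∀ p q : ℕ, p ≤ q → q < K0 + m + 1 → t p ≤ t q)
    (hfull : FullC t K0 A m) :
    ∃ u, u ≤ m ∧ SplitC t K0 A m u := by
  classical
  set Pq : ℕ → Prop := fun q => q = 0 ∨ (1 ≤ q ∧ t (K0 + (q - 1)) = A + 1 + q) with hPq
  set u0 := Nat.findGreatest Pq m with hu0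
  have hu0m : u0 ≤ m := Nat.findGreatest_le m
  have hP0 : Pq 0 := Or.inl rfl
  have hPu0 : Pq u0 := Nat.findGreatest_spec (Nat.zero_le m) hP0
  have hgreat : ∀ q, u0 < q → q ≤ m → ¬ Pq q := by
    intro q hq hqm
    exact Nat.findGreatest_is_greatest hq hqm
  refine ⟨u0, hu0m, ?_, ?_, ?_, ?_⟩
  · intro p hp
    exact hfull p (by omega)
  · intro h1
    rcases hPu0 with h | h
    · omega
    · exact h.2
  · intro p hp
    have hge := hfull (u0 + p) (by omega)
    rcases le_or_gt (A + u0 + 2 + p + 1) (t (K0 + (u0 + p))) with hok | hbad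
    · rw [show K0 + u0 + p = K0 + (u0 + p) by omega]
      omega
    · exfalso
      have heq : t (K0 + (u0 + p)) = A + u0 + p + 2 := by omega
      apply hgreat (u0 + p + 1) (by omega) (by omega)
      right
      refine ⟨by omega, ?_⟩
      rw [show K0 + (u0 + p + 1 - 1) = K0 + (u0 + p) by omega]
      omega
  · intro hv
    have hle : t (K0 + (m - 1)) ≤ t (K0 + m) := htm _ _ (by omega) (by omega)
    have hge := hfull (m - 1) (by omega)
    rcases eq_or_lt_of_le hge with heq | hlt
    · exfalso
      apply hgreat m (by omega) (by omega)
      right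
      exact ⟨by omega, by omega⟩
    · rw [show K0 + u0 + (m - u0 - 1) = K0 + (m - 1) by omega]
      omega

lemma fullC_of_splitC (hlast : t (K0 + m) = A + m + 2) {u : ℕ} (hum : u ≤ m)
    (hs : SplitC t K0 A m u) : FullC t K0 A m := by
  obtain ⟨ha, hb, hc, hd⟩ := hs
  intro p hp
  rcases lt_or_ge (p + 2) (u + 1) with h1 | h1
  · exact ha p (by omega)
  rcases eq_or_ne (p + 1) u with h2 | h2
  · have := hb (by omega)
    rw [show K0 + (u - 1) = K0 + p by omega] at this
    omega
  · -- p ≥ u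
    rcases le_or_gt (p - u + 2) (m - u) with h3 | h3
    · have := hc (p - u) h3
      rw [show K0 + u + (p - u) = K0 + p by omega] at this
      omega
    · -- p = m - 1, use hd
      have hv : 1 ≤ m - u := by omega
      have := hd hv
      rw [show K0 + u + (m - u - 1) = K0 + (m - 1) by omega] at this
      rw [show K0 + p = K0 + (m - 1) by omega]
      omega

end SplitArith

/-! ### Section H : same-cycle helper lemmas -/

lemma not_sameCycle_fixed {n : ℕ} {σ : Equiv.Perm (Fin n)} {s b : Fin n}
    (hfix : σ b = b) (hne : s ≠ b) : ¬ σ.SameCycle s b := by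
  intro h
  obtain ⟨i, hi⟩ := h.symm
  rw [Equiv.Perm.zpow_apply_eq_self_of_apply_eq_self hfix i] at hi
  exact hne hi.symm

lemma not_sameCycle_low {n : ℕ} (hn : 0 < n) (P Z : List ℕ) (m : ℕ)
    (hZ : ∀ z ∈ Z, z = 0)
    (hbound : 0 + (P ++ (m + 1) :: Z).sum + (P ++ (m + 1) :: Z).length ≤ n)
    (s b : Fin n) (hs : (s : ℕ) < P.sum + P.length) (hb : P.sum + P.length ≤ (b : ℕ)) :
    ¬ (canonicalPerm n hn (P ++ (m + 1) :: Z)).SameCycle s b := by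
  have hinv : ∀ i : ℕ,
      (((canonicalPerm n hn (P ++ (m + 1) :: Z) ^ i) s : Fin n) : ℕ) < P.sum + P.length := by
    intro i
    induction i with
    | zero => simpa using hs
    | succ i ih =>
        have h1 : (canonicalPerm n hn (P ++ (m + 1) :: Z) ^ (i + 1)) s
            = canonicalPerm n hn (P ++ (m + 1) :: Z)
                ((canonicalPerm n hn (P ++ (m + 1) :: Z) ^ i) s) := by
          rw [pow_succ']; rfl
        rw [h1]
        show ((canonicalPermAux n hn 0 (P ++ (m + 1) :: Z)) _ : ℕ) < _
        rw [canonicalPermAux_apply n hn _ 0 hbound _, evalComp_decomp hZ (m + 1), if_pos ih]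
        exact evalComp_low_lt ih
  intro h
  obtain ⟨i, _, hi⟩ := h.exists_pow_eq'
  have := hinv i
  rw [hi] at this
  omega

lemma canonicalPerm_zeros (n : ℕ) (hn : 0 < n) (mu : List ℕ)
    (hmu : ∀ z ∈ mu, z = 0) (hbound : 0 + mu.sum + mu.length ≤ n) :
    canonicalPerm n hn mu = 1 := by
  apply Equiv.ext
  intro x
  apply Fin.ext
  unfold canonicalPerm
  rw [canonicalPermAux_apply n hn _ 0 hbound _, evalComp_zeros hmu]
  rfl

/-! ### Section I : condition translations for the main proof -/

lemma cond_one_iff {P Z : List ℕ} (hZ : ∀ z ∈ Z, z = 0) (m : ℕ) (t : ℕ → ℕ) {k : ℕ}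
    (htm : ∀ p q : ℕ, p ≤ q → q < k → t p ≤ t q) (hk : P.sum + (m + 1) ≤ k) :
    Cond (P ++ (m + 1) :: Z) t ↔
      (CondO P 0 0 t ∧ FullC t P.sum (P.sum + P.length) m
        ∧ t (P.sum + m) = P.sum + P.length + m + 2) := by
  rw [cond_iff_condO, condO_append, condO_cons]
  simp only [Nat.zero_add]
  rw [Epred_iff htm _ _ _ (by omega)]
  constructor
  · rintro ⟨h1, ⟨h2, h3⟩, _⟩
    refine ⟨h1, h2, ?_⟩
    have h4 := h3 (by omega)
    rw [show P.sum + (m + 1 - 1) = P.sum + m by omega] at h4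
    omega
  · rintro ⟨h1, h2, h3⟩
    refine ⟨h1, ⟨h2, fun _ => ?_⟩, condO_zeros hZ _ _ t⟩
    rw [show P.sum + (m + 1 - 1) = P.sum + m by omega]
    omega

lemma cond_two_iff {P Z : List ℕ} (hZ : ∀ z ∈ Z, z = 0) (u m : ℕ) (hum : u ≤ m)
    (t : ℕ → ℕ) {k : ℕ} (htm : ∀ p q : ℕ, p ≤ q → q < k → t p ≤ t q)
    (hk : P.sum + m ≤ k) :
    Cond (P ++ u :: (m - u) :: Z) t ↔
      (CondO P 0 0 t ∧ SplitC t P.sum (P.sum + P.length) m u) := by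
  rw [cond_iff_condO, condO_append, condO_cons, condO_cons]
  simp only [Nat.zero_add]
  rw [Epred_iff htm _ _ _ (by omega), Epred_iff htm _ _ _ (by omega)]
  unfold SplitC
  constructor
  · rintro ⟨h1, ⟨h2a, h2b⟩, ⟨h3a, h3b⟩, _⟩
    refine ⟨h1, h2a, h2b, fun p hp => ?_, fun hv => ?_⟩
    · have := h3a p hp; omega
    · have := h3b hv; omega
  · rintro ⟨h1, h2a, h2b, h3a, h3b⟩
    refine ⟨h1, ⟨h2a, h2b⟩, ⟨fun p hp => ?_, fun hv => ?_⟩, condO_zeros hZ _ _ t⟩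
    · have := h3a p hp; omega
    · have := h3b hv; omega

/-! ### Section J : the main theorem -/

theorem mainG : ∀ (k : ℕ) (n : ℕ) (hn : 0 < n) (mu : List ℕ), mu.sum = k →
    k + mu.length ≤ n → ∀ t : ℕ → ℕ, (∀ p, p < k → 2 ≤ t p ∧ t p ≤ n) →
    (∀ p q : ℕ, p ≤ q → q < k → t p ≤ t q) →
    (JMl n hn t k).coeff (canonicalPerm n hn mu) = if Cond mu t then 1 else 0 := by
  intro k
  induction k using Nat.strong_induction_on with
  | _ k IH =>
  rcases k with _ | K
  · -- base case k = 0
    intro n hn mu hsum hlen t ht htm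
    have hz : ∀ z ∈ mu, z = 0 := List.sum_eq_zero_iff.mp hsum
    rw [canonicalPerm_zeros n hn mu hz (by omega), JMl_zero]
    rw [if_pos (by rw [cond_iff_condO]; exact condO_zeros hz 0 0 t)]
    show (MonoidAlgebra.single 1 1 : GA n).coeff 1 = 1
    exact Finsupp.single_eq_same
  · -- inductive step, k = K + 1
    intro n hn mu hsum hlen t ht htm
    obtain ⟨P, m, Z, rfl, hZ⟩ := exists_last_nonzero (mu := mu) (by omega)
    have hZsum : Z.sum = 0 := List.sum_eq_zero hZ
    have hsum' : P.sum + (m + 1) = K + 1 := by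
      simp [hZsum] at hsum; omega
    have hlenP : (P ++ (m + 1) :: Z).length = P.length + 1 + Z.length := by simp; omega
    have hlen' : (K + 1) + (P.length + 1 + Z.length) ≤ n := by rw [← hlenP]; exact hlen
    have hK : K = P.sum + m := by omega
    have hbound : 0 + (P ++ (m + 1) :: Z).sum + (P ++ (m + 1) :: Z).length ≤ n := by
      rw [hlenP]; simp [hZsum]; omega
    have hMn : P.sum + P.length + (m + 1) < n := by omega
    have htK := ht K (by omega)
    have hphi : Module.finrank ℚ (fixSub n (canonicalPerm n hn (P ++ (m + 1) :: Z)))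
        + (K + 1) ≤ n := by
      have h0 := phi_canonicalPermAux n hn (P ++ (m + 1) :: Z) 0 hbound
      rw [hsum] at h0
      exact h0
    rw [JMl_succ, coeff_mul_JM]
    have hidxv : ((⟨(t K - 1) % n, Nat.mod_lt _ hn⟩ : Fin n) : ℕ) = t K - 1 :=
      Nat.mod_eq_of_lt (by omega)
    rcases lt_trichotomy (t K) (P.sum + P.length + (m + 1) + 1) with hcase | hcase | hcase
    · -- Case 1 : t K ≤ M, every term vanishes and the condition fails
      rw [Finset.sum_eq_zero, if_neg]
      · intro hcond
        obtain ⟨-, -, h3⟩ := (cond_one_iff hZ m t htm (by omega)).mp hcond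
        rw [← hK] at h3
        omega
      · intro s hs
        rw [Finset.mem_filter] at hs
        by_contra hne
        have hmod : (t K - 1) % n = t K - 1 := Nat.mod_eq_of_lt (by omega)
        have hsv : (s : ℕ) < t K - 1 := by
          have h0 := hs.2
          rw [Fin.lt_def] at h0
          simpa [hmod] using h0
        set MF : Fin n := ⟨P.sum + P.length + (m + 1), by omega⟩ with hMF
        have hMFv : (MF : ℕ) = P.sum + P.length + (m + 1) := rfl
        have hMfix := JMl_fix t K _ hne MF (fun p hp => by
          have h1 := htm p K (by omega) (by omega)
          have h2 := ht p (by omega)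
          rw [hMFv]
          omega)
        have hswapfix : (Equiv.swap s (⟨(t K - 1) % n, Nat.mod_lt _ hn⟩ : Fin n)) MF = MF := by
          apply Equiv.swap_apply_of_ne_of_ne
          · intro hh
            have h3 := congrArg Fin.val hh
            rw [hMFv] at h3
            omega
          · intro hh
            have h3 := congrArg Fin.val hh
            rw [hMFv] at h3
            simp only [Fin.val_mk, hmod] at h3
            omega
        have heval : ((canonicalPerm n hn (P ++ (m + 1) :: Z)) MF : ℕ) = P.sum + P.length := by
          show ((canonicalPermAux n hn 0 (P ++ (m + 1) :: Z)) MF : ℕ) = _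
          rw [canonicalPermAux_apply n hn _ 0 hbound, evalComp_decomp hZ (m + 1), hMFv]
          rw [if_neg (by omega)]
          unfold evalCyc
          split_ifs <;> omega
        have hcontr : MF = canonicalPerm n hn (P ++ (m + 1) :: Z) MF := by
          conv_lhs => rw [← hMfix]
          rw [Equiv.Perm.mul_apply, hswapfix]
        have h9 := congrArg Fin.val hcontr
        rw [heval, hMFv] at h9
        omega
    · -- Case 2 : t K = M + 1, the genuine splitting case
      have hmod : (t K - 1) % n = t K - 1 := Nat.mod_eq_of_lt (by omega)
      obtain ⟨MF, hMFv⟩ : ∃ MF : Fin n, (MF : ℕ) = P.sum + P.length + (m + 1) :=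
        ⟨⟨_, by omega⟩, rfl⟩
      rw [show (⟨(t K - 1) % n, Nat.mod_lt _ hn⟩ : Fin n) = MF from
        Fin.ext (by rw [hMFv]; show (t K - 1) % n = _; omega)]
      have hkill : ∀ s : Fin n, (s : ℕ) < P.sum + P.length →
          (JMl n hn t K).coeff (canonicalPerm n hn (P ++ (m + 1) :: Z) * Equiv.swap s MF) = 0 := by
        intro s hsv
        by_contra hne
        have hsc := not_sameCycle_low hn P Z m hZ hbound s MF hsv (by rw [hMFv]; omega)
        have hne' : s ≠ MF := by
          intro hh
          rw [hh, hMFv] at hsv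
          omega
        have hmerge := finrank_fixSub_merge _ s MF hne' hsc
        have hfr := JMl_finrank t K _ hne
        omega
      have hval : ∀ s : Fin n, P.sum + P.length ≤ (s : ℕ) →
          (s : ℕ) < P.sum + P.length + (m + 1) →
          (JMl n hn t K).coeff (canonicalPerm n hn (P ++ (m + 1) :: Z) * Equiv.swap s MF)
            = if (CondO P 0 0 t ∧
                SplitC t P.sum (P.sum + P.length) m ((s : ℕ) - (P.sum + P.length)))
              then 1 else 0 := by
        intro s hs1 hs2
        rw [split_identity n hn P Z m hZ (by omega) (s : ℕ) hs1 hs2 s MF rfl hMFv]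
        rw [show P.sum + P.length + m - (s : ℕ) = m - ((s : ℕ) - (P.sum + P.length)) by omega]
        rw [IH K (by omega) n hn _ (by simp [hZsum]; omega) (by simp; omega) t
          (fun p hp => ht p (by omega)) (fun p q h1 h2 => htm p q h1 (by omega))]
        rw [cond_two_iff hZ ((s : ℕ) - (P.sum + P.length)) m (by omega) t htm (by omega)]
        exact @if_congr ℚ _ _ (Classical.propDecidable _) _ _ _ _ _ Iff.rfl rfl rfl
      by_cases hful : CondO P 0 0 t ∧ FullC t P.sum (P.sum + P.length) m
      · obtain ⟨u0, hu0m, hsplit⟩ := splitC_of_fullC t P.sum (P.sum + P.length) m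
          (by rw [← hK]; omega) (fun p q h1 h2 => htm p q h1 (by omega)) hful.2
        rw [if_pos ((cond_one_iff hZ m t htm (by omega)).mpr
          ⟨hful.1, hful.2, by rw [← hK]; omega⟩)]
        obtain ⟨s0, hs0v⟩ : ∃ s0 : Fin n, (s0 : ℕ) = P.sum + P.length + u0 :=
          ⟨⟨_, by omega⟩, rfl⟩
        have hs0mem : s0 ∈ Finset.univ.filter (fun s => s < MF) := by
          rw [Finset.mem_filter]
          exact ⟨Finset.mem_univ _, by rw [Fin.lt_def, hs0v, hMFv]; omega⟩
        have hz0 : ∀ b ∈ Finset.univ.filter (fun s => s < MF), b ≠ s0 →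
            (JMl n hn t K).coeff (canonicalPerm n hn (P ++ (m + 1) :: Z) * Equiv.swap b MF) = 0 := by
          intro b hbmem hbne
          have hblt : (b : ℕ) < P.sum + P.length + (m + 1) := by
            have h0 := (Finset.mem_filter.mp hbmem).2
            rw [Fin.lt_def, hMFv] at h0
            exact h0
          rcases lt_or_ge (b : ℕ) (P.sum + P.length) with hlow | hhigh
          · exact hkill b hlow
          · rw [hval b hhigh hblt, if_neg]
            rintro ⟨-, hsp⟩
            have hne0 : (b : ℕ) - (P.sum + P.length) ≠ u0 := by
              intro he
              exact hbne (Fin.ext (by rw [hs0v]; omega))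
            rcases lt_or_gt_of_ne hne0 with hlt | hgt
            · exact splitC_unique t P.sum (P.sum + P.length) m hlt hu0m hsp hsplit
            · exact splitC_unique t P.sum (P.sum + P.length) m hgt (by omega) hsplit hsp
        rw [Finset.sum_eq_single_of_mem s0 hs0mem hz0,
          hval s0 (by rw [hs0v]; omega) (by rw [hs0v]; omega), if_pos]
        refine ⟨hful.1, ?_⟩
        rw [show (s0 : ℕ) - (P.sum + P.length) = u0 by rw [hs0v]; omega]
        exact hsplit
      · rw [Finset.sum_eq_zero, if_neg]
        · intro hcond
          obtain ⟨h1, h2, -⟩ := (cond_one_iff hZ m t htm (by omega)).mp hcond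
          exact hful ⟨h1, h2⟩
        · intro s hsmem
          have hslt : (s : ℕ) < P.sum + P.length + (m + 1) := by
            have h0 := (Finset.mem_filter.mp hsmem).2
            rw [Fin.lt_def, hMFv] at h0
            exact h0
          rcases lt_or_ge (s : ℕ) (P.sum + P.length) with hlow | hhigh
          · exact hkill s hlow
          · rw [hval s hhigh hslt, if_neg]
            rintro ⟨h1, hsp⟩
            exact hful ⟨h1, fullC_of_splitC t P.sum (P.sum + P.length) m
              (by rw [← hK]; omega) (by omega) hsp⟩
    · -- Case 3 : t K > M + 1, merge with a fixed point, terms vanish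
      rw [Finset.sum_eq_zero, if_neg]
      · intro hcond
        obtain ⟨-, -, h3⟩ := (cond_one_iff hZ m t htm (by omega)).mp hcond
        rw [← hK] at h3
        omega
      · intro s hs
        rw [Finset.mem_filter] at hs
        by_contra hne
        have hmod : (t K - 1) % n = t K - 1 := Nat.mod_eq_of_lt (by omega)
        set idx : Fin n := ⟨(t K - 1) % n, Nat.mod_lt _ hn⟩ with hidx
        have hidxval : (idx : ℕ) = t K - 1 := hmod
        have hfix : canonicalPerm n hn (P ++ (m + 1) :: Z) idx = idx := by
          apply Fin.ext
          show ((canonicalPermAux n hn 0 (P ++ (m + 1) :: Z)) idx : ℕ) = _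
          rw [canonicalPermAux_apply n hn _ 0 hbound, evalComp_decomp hZ (m + 1), hidxval]
          rw [if_neg (by omega), evalCyc_of_gt (by omega)]
        have hne' : s ≠ idx := ne_of_lt hs.2
        have hsc := not_sameCycle_fixed hfix hne'
        have hmerge := finrank_fixSub_merge (canonicalPerm n hn (P ++ (m + 1) :: Z)) s idx
          hne' hsc
        have hfr := JMl_finrank t K _ hne
        omega

/-- For a partition `μ` of `k` with length `l` and `n ≥ k + l`, given
`2 ≤ t_1 ≤ ⋯ ≤ t_k ≤ n` (here `t` is indexed from `0`, i.e. `t 0, …, t (k-1)` are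
`t_1, …, t_k`), the coefficient of `σ_μ` in `J_{t_1} ⋯ J_{t_k}` equals `1` if each
consecutive segment of `t` of length `μ_i` belongs to `𝔈(μ_1+⋯+μ_{i−1}+i ; μ_i)`,
and equals `0` otherwise. -/
theorem coefficient_JM_product (n k : ℕ) (hn : 0 < n)
    (mu : List ℕ) (hmu : ∀ x ∈ mu, 0 < x) (hsort : mu.Pairwise (· ≥ ·))
    (hk : mu.sum = k) (hwt : k + mu.length ≤ n)
    (t : ℕ → ℕ) (ht : ∀ p < k, 2 ≤ t p ∧ t p ≤ n)
    (htm : ∀ p q : ℕ, p ≤ q → q < k → t p ≤ t q) :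
    (((List.range k).map
        (fun p => JM n (⟨(t p - 1) % n, Nat.mod_lt _ hn⟩ : Fin n))).prod).coeff
      (canonicalPerm n hn mu) =
    if ∀ i : Fin mu.length,
        Epred ((mu.take i).sum + i + 1) (mu.get i)
          (fun q : Fin (mu.get i) => t ((mu.take i).sum + q))
      then 1 else 0 := by
  convert mainG k n hn mu hk hwt t ht htm using 2 <;> rfl
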